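/- Suppose 0 ≤ c(z,a) ≤ M and 0 ≤ w2(z) ≤ K for all z ∈ Z, a ∈ {0,1}, with M, K > 0. Then the dual function d attains a unique minimizer λ* over [0, ∞), and the projected gradient iterates λ_{t+1} = max(0, λ_t − η d′(λ_t)) with step size η = 2β/(M²K² + 2β²) and any initialization λ_0 ≥ 0 satisfy |λ_t − λ*| ≤ ( M²K²/(M²K² + 2β²) )^t · |λ_0 − λ*| for every t ≥ 0. -/

import Mathlib

open Finset

/-- `q_λ(z,a) = w1(z) r(z,a) − λ w2(z) c(z,a)`. -/
noncomputable def qfun {Z : Type*} (r c : Z → Bool → ℝ) (w1 w2 : Z → ℝ)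
    (lam : ℝ) (z : Z) (a : Bool) : ℝ :=
  w1 z * r z a - lam * (w2 z * c z a)

/-- Partition function `Q(z,λ) = ∑_a exp(q_λ(z,a)/β)`. -/
noncomputable def Qpart {Z : Type*} (r c : Z → Bool → ℝ) (w1 w2 : Z → ℝ)
    (β lam : ℝ) (z : Z) : ℝ :=
  ∑ a, Real.exp (qfun r c w1 w2 lam z a / β)

/-- The dual function `d(λ) = β ∑_z ρ(z) log Q(z,λ) + λ C + (β/2) λ²`. -/
noncomputable def dualFun {Z : Type*} [Fintype Z] (ρ : Z → ℝ)
    (r c : Z → Bool → ℝ) (w1 w2 : Z → ℝ) (β C lam : ℝ) : ℝ :=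
  β * ∑ z, ρ z * Real.log (Qpart r c w1 w2 β lam z) + lam * C + β * lam ^ 2 / 2

noncomputable def Npart {Z : Type*} (r c : Z → Bool → ℝ) (w1 w2 : Z → ℝ)
    (β lam : ℝ) (z : Z) : ℝ :=
  ∑ a, (w2 z * c z a) * Real.exp (qfun r c w1 w2 lam z a / β)

noncomputable def S2part {Z : Type*} (r c : Z → Bool → ℝ) (w1 w2 : Z → ℝ)
    (β lam : ℝ) (z : Z) : ℝ :=
  ∑ a, (w2 z * c z a) ^ 2 * Real.exp (qfun r c w1 w2 lam z a / β)

noncomputable def Dz {Z : Type*} (r c : Z → Bool → ℝ) (w1 w2 : Z → ℝ)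
    (β : ℝ) (z : Z) (lam : ℝ) : ℝ :=
  -(Npart r c w1 w2 β lam z / Qpart r c w1 w2 β lam z)

noncomputable def DzDer {Z : Type*} (r c : Z → Bool → ℝ) (w1 w2 : Z → ℝ)
    (β : ℝ) (z : Z) (lam : ℝ) : ℝ :=
  (S2part r c w1 w2 β lam z * Qpart r c w1 w2 β lam z - (Npart r c w1 w2 β lam z) ^ 2) /
    (β * (Qpart r c w1 w2 β lam z) ^ 2)

noncomputable def dDer {Z : Type*} [Fintype Z] (ρ : Z → ℝ)
    (r c : Z → Bool → ℝ) (w1 w2 : Z → ℝ) (β C lam : ℝ) : ℝ :=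
  ∑ z, ρ z * Dz r c w1 w2 β z lam + C + β * lam

section lems
variable {Z : Type*} (r c : Z → Bool → ℝ) (w1 w2 : Z → ℝ) (β : ℝ) (z : Z) (lam : ℝ)

lemma Qpart_pos : 0 < Qpart r c w1 w2 β lam z := by
  rw [Qpart, Fintype.sum_bool]; positivity

lemma exp_hasDeriv (hβ : β ≠ 0) (a : Bool) :
    HasDerivAt (fun l => Real.exp (qfun r c w1 w2 l z a / β))
      (-(w2 z * c z a) / β * Real.exp (qfun r c w1 w2 lam z a / β)) lam := by
  have h1 : HasDerivAt (fun l : ℝ => qfun r c w1 w2 l z a / β) (-(w2 z * c z a) / β) lam := by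
    have : HasDerivAt (fun l : ℝ => w1 z * r z a - l * (w2 z * c z a))
        (-(w2 z * c z a)) lam := by
      simpa using ((hasDerivAt_id lam).mul_const (w2 z * c z a)).const_sub (w1 z * r z a)
    simpa [qfun] using this.div_const β
  simpa [mul_comm] using h1.exp

lemma Qpart_hasDeriv (hβ : β ≠ 0) :
    HasDerivAt (fun l => Qpart r c w1 w2 β l z) (-(Npart r c w1 w2 β lam z) / β) lam := by
  have := HasDerivAt.fun_sum (fun a (_ : a ∈ Finset.univ) => exp_hasDeriv r c w1 w2 β z lam hβ a)
  refine this.congr_deriv ?_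
  rw [Npart]; rw [Fintype.sum_bool, Fintype.sum_bool]; ring

lemma Npart_hasDeriv (hβ : β ≠ 0) :
    HasDerivAt (fun l => Npart r c w1 w2 β l z) (-(S2part r c w1 w2 β lam z) / β) lam := by
  have := HasDerivAt.fun_sum (fun a (_ : a ∈ Finset.univ) =>
    (exp_hasDeriv r c w1 w2 β z lam hβ a).const_mul (w2 z * c z a))
  refine this.congr_deriv ?_
  rw [S2part]; rw [Fintype.sum_bool, Fintype.sum_bool]; ring

lemma Dz_hasDeriv (hβ : β ≠ 0) :
    HasDerivAt (fun l => Dz r c w1 w2 β z l) (DzDer r c w1 w2 β z lam) lam := by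
  have hQ := Qpart_hasDeriv r c w1 w2 β z lam hβ
  have hN := Npart_hasDeriv r c w1 w2 β z lam hβ
  have hQ0 := (Qpart_pos r c w1 w2 β z lam).ne'
  have := (hN.div hQ hQ0).neg
  refine this.congr_deriv ?_
  rw [DzDer]
  field_simp
  ring
end lems

section bounds
variable {Z : Type*} {r c : Z → Bool → ℝ} {w1 w2 : Z → ℝ} {β : ℝ} {M K : ℝ}

lemma DzDer_bounds (hβ : 0 < β) (hM : 0 < M) (hK : 0 < K)
    (hc : ∀ (z : Z) a, 0 ≤ c z a ∧ c z a ≤ M) (hw2 : ∀ z, 0 ≤ w2 z)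
    (hw2b : ∀ z, w2 z ≤ K) (z : Z) (lam : ℝ) :
    0 ≤ DzDer r c w1 w2 β z lam ∧ DzDer r c w1 w2 β z lam ≤ M ^ 2 * K ^ 2 / (4 * β) := by
  set Ef := Real.exp (qfun r c w1 w2 lam z false / β) with hEf
  set Et := Real.exp (qfun r c w1 w2 lam z true / β) with hEt
  have hEfp : 0 < Ef := Real.exp_pos _
  have hEtp : 0 < Et := Real.exp_pos _
  have hQ : Qpart r c w1 w2 β lam z = Et + Ef := by rw [Qpart, Fintype.sum_bool]
  have hid : S2part r c w1 w2 β lam z * Qpart r c w1 w2 β lam z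
      - (Npart r c w1 w2 β lam z) ^ 2
      = (w2 z * c z false - w2 z * c z true) ^ 2 * Ef * Et := by
    rw [S2part, Npart, hQ, Fintype.sum_bool, Fintype.sum_bool]; ring
  have hbf : 0 ≤ w2 z * c z false ∧ w2 z * c z false ≤ K * M :=
    ⟨mul_nonneg (hw2 z) (hc z false).1,
     mul_le_mul (hw2b z) (hc z false).2 (hc z false).1 hK.le⟩
  have hbt : 0 ≤ w2 z * c z true ∧ w2 z * c z true ≤ K * M :=
    ⟨mul_nonneg (hw2 z) (hc z true).1,
     mul_le_mul (hw2b z) (hc z true).2 (hc z true).1 hK.le⟩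
  constructor
  · rw [DzDer, hid]
    have : (0:ℝ) < β * (Qpart r c w1 w2 β lam z) ^ 2 := by
      have := Qpart_pos r c w1 w2 β z lam; positivity
    positivity
  · rw [DzDer, hid, hQ, div_le_div_iff₀ (by positivity) (by positivity)]
    have hsq : (w2 z * c z false - w2 z * c z true) ^ 2 ≤ (K * M) ^ 2 :=
      sq_le_sq' (by linarith [hbf.1, hbf.2, hbt.1, hbt.2]) (by linarith [hbf.1, hbf.2, hbt.1, hbt.2])
    have hEE : 4 * (Ef * Et) ≤ (Et + Ef) ^ 2 := by nlinarith [sq_nonneg (Et - Ef)]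
    nlinarith [mul_pos hEfp hEtp, sq_nonneg (Et + Ef), mul_le_mul hsq hEE (by positivity) (by positivity),
      mul_pos (mul_pos hK hM) (mul_pos hK hM)]

lemma Dz_slope (hβ : 0 < β) (hM : 0 < M) (hK : 0 < K)
    (hc : ∀ (z : Z) a, 0 ≤ c z a ∧ c z a ≤ M) (hw2 : ∀ z, 0 ≤ w2 z)
    (hw2b : ∀ z, w2 z ≤ K) (z : Z) {x y : ℝ} (hxy : x ≤ y) :
    0 ≤ Dz r c w1 w2 β z y - Dz r c w1 w2 β z x ∧
    Dz r c w1 w2 β z y - Dz r c w1 w2 β z x ≤ M ^ 2 * K ^ 2 / (4 * β) * (y - x) := by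
  rcases eq_or_lt_of_le hxy with h | h
  · subst h; simp
  · have hcont : ContinuousOn (fun l => Dz r c w1 w2 β z l) (Set.Icc x y) :=
      (fun l _ => ((Dz_hasDeriv r c w1 w2 β z l hβ.ne').differentiableAt.continuousAt).continuousWithinAt)
    obtain ⟨ξ, _, hξ⟩ := exists_hasDerivAt_eq_slope (fun l => Dz r c w1 w2 β z l)
      (fun l => DzDer r c w1 w2 β z l) h hcont
      (fun l _ => Dz_hasDeriv r c w1 w2 β z l hβ.ne')
    obtain ⟨h0, h1⟩ := DzDer_bounds hβ hM hK hc hw2 hw2b z ξ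
    rw [hξ] at h0 h1
    constructor
    · have := mul_nonneg h0 (sub_pos.2 h).le
      rwa [div_mul_cancel₀ _ (sub_pos.2 h).ne'] at this
    · have := mul_le_mul_of_nonneg_right h1 (sub_pos.2 h).le
      rwa [div_mul_cancel₀ _ (sub_pos.2 h).ne'] at this
end bounds

section main
variable {Z : Type*} [Fintype Z] {ρ : Z → ℝ} {r c : Z → Bool → ℝ} {w1 w2 : Z → ℝ}
  {β C M K : ℝ}

lemma dual_hasDeriv (hβ : 0 < β) (lam : ℝ) :
    HasDerivAt (fun l => dualFun ρ r c w1 w2 β C l) (dDer ρ r c w1 w2 β C lam) lam := by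
  have hlog : ∀ z : Z, HasDerivAt (fun l => ρ z * Real.log (Qpart r c w1 w2 β l z))
      (ρ z * (-(Npart r c w1 w2 β lam z) / β / Qpart r c w1 w2 β lam z)) lam := fun z =>
    ((Qpart_hasDeriv r c w1 w2 β z lam hβ.ne').log
      (Qpart_pos r c w1 w2 β z lam).ne').const_mul (ρ z)
  have hsum := (HasDerivAt.fun_sum (fun z (_ : z ∈ Finset.univ) => hlog z)).const_mul β
  have hquad : HasDerivAt (fun l : ℝ => l * C + β * l ^ 2 / 2) (C + β * lam) lam := by
    have h1 : HasDerivAt (fun l : ℝ => l * C) C lam := by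
      simpa using (hasDerivAt_id lam).mul_const C
    have h2 : HasDerivAt (fun l : ℝ => β * l ^ 2 / 2) (β * lam) lam := by
      have := ((hasDerivAt_pow 2 lam).const_mul β).div_const 2
      exact this.congr_deriv (by push_cast; ring)
    exact h1.fun_add h2
  have := hsum.fun_add hquad
  have heq : β * ∑ z, ρ z * (-(Npart r c w1 w2 β lam z) / β / Qpart r c w1 w2 β lam z)
      + (C + β * lam) = dDer ρ r c w1 w2 β C lam := by
    rw [dDer, Finset.mul_sum]
    have : ∀ z : Z, β * (ρ z * (-(Npart r c w1 w2 β lam z) / β / Qpart r c w1 w2 β lam z))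
        = ρ z * Dz r c w1 w2 β z lam := by
      intro z
      have hb : β ≠ 0 := hβ.ne'
      have hQ0 := (Qpart_pos r c w1 w2 β z lam).ne'
      rw [Dz]
      field_simp
    rw [Finset.sum_congr rfl fun z _ => this z]
    ring
  rw [← heq]
  refine this.congr_of_eventuallyEq (Filter.Eventually.of_forall fun l => ?_)
  simp only [dualFun, Pi.add_apply]; ring

lemma dDer_slope (hρ : ∀ z, 0 ≤ ρ z) (hρs : ∑ z, ρ z = 1)
    (hβ : 0 < β) (hM : 0 < M) (hK : 0 < K)
    (hc : ∀ (z : Z) a, 0 ≤ c z a ∧ c z a ≤ M) (hw2 : ∀ z, 0 ≤ w2 z)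
    (hw2b : ∀ z, w2 z ≤ K) {x y : ℝ} (hxy : x ≤ y) :
    β * (y - x) ≤ dDer ρ r c w1 w2 β C y - dDer ρ r c w1 w2 β C x ∧
    dDer ρ r c w1 w2 β C y - dDer ρ r c w1 w2 β C x
      ≤ (M ^ 2 * K ^ 2 / (4 * β) + β) * (y - x) := by
  have hS : dDer ρ r c w1 w2 β C y - dDer ρ r c w1 w2 β C x
      = (∑ z, ρ z * (Dz r c w1 w2 β z y - Dz r c w1 w2 β z x)) + β * (y - x) := by
    rw [dDer, dDer,
      Finset.sum_congr rfl fun (z : Z) (_ : z ∈ Finset.univ) => mul_sub (ρ z) (Dz r c w1 w2 β z y) (Dz r c w1 w2 β z x),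
      Finset.sum_sub_distrib]
    ring
  have hterm := fun z => Dz_slope (r := r) (c := c) (w1 := w1) (w2 := w2)
    hβ hM hK hc hw2 hw2b z hxy
  constructor
  · rw [hS]
    have : 0 ≤ ∑ z, ρ z * (Dz r c w1 w2 β z y - Dz r c w1 w2 β z x) :=
      Finset.sum_nonneg fun z _ => mul_nonneg (hρ z) (hterm z).1
    linarith
  · rw [hS]
    have : ∑ z, ρ z * (Dz r c w1 w2 β z y - Dz r c w1 w2 β z x)
        ≤ ∑ z, ρ z * (M ^ 2 * K ^ 2 / (4 * β) * (y - x)) :=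
      Finset.sum_le_sum fun z _ => mul_le_mul_of_nonneg_left (hterm z).2 (hρ z)
    rw [← Finset.sum_mul, hρs, one_mul] at this
    linarith

lemma dDer_cont (hβ : 0 < β) :
    Continuous (fun l => dDer ρ r c w1 w2 β C l) := by
  have h1 : ∀ z : Z, Continuous (fun l => Dz r c w1 w2 β z l) := fun z =>
    Differentiable.continuous (fun l => (Dz_hasDeriv r c w1 w2 β z l hβ.ne').differentiableAt)
  exact ((continuous_finset_sum _ fun z _ => continuous_const.mul (h1 z)).add
    continuous_const).add (continuous_const.mul continuous_id)

lemma dual_mvt (hβ : 0 < β) {a b : ℝ} (hab : a < b) :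
    ∃ ξ ∈ Set.Ioo a b,
      dualFun ρ r c w1 w2 β C b - dualFun ρ r c w1 w2 β C a
        = dDer ρ r c w1 w2 β C ξ * (b - a) := by
  obtain ⟨ξ, hξm, hξ⟩ := exists_hasDerivAt_eq_slope (fun l => dualFun ρ r c w1 w2 β C l)
    (fun l => dDer ρ r c w1 w2 β C l) hab
    (fun l _ => (dual_hasDeriv hβ l).differentiableAt.continuousAt.continuousWithinAt)
    (fun l _ => dual_hasDeriv hβ l)
  exact ⟨ξ, hξm, by rw [hξ, div_mul_cancel₀ _ (sub_pos.2 hab).ne']⟩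
end main

noncomputable def Tmap {Z : Type*} [Fintype Z] (ρ : Z → ℝ) (r c : Z → Bool → ℝ)
    (w1 w2 : Z → ℝ) (β C η : ℝ) (u : ℝ) : ℝ :=
  max 0 (u - η * dDer ρ r c w1 w2 β C u)


set_option maxHeartbeats 2000000 in
/-- the dual function attains a unique minimizer over `[0,∞)`,
and projected gradient descent with step size `η = 2β/(M²K² + 2β²)` converges
to it at the linear rate `M²K²/(M²K² + 2β²)`. -/
theorem projected_gradient_linear_convergence {Z : Type*} [Fintype Z] [Nonempty Z]
    (ρ : Z → ℝ) (hρ_pos : ∀ z, 0 < ρ z) (hρ_sum : ∑ z, ρ z = 1)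
    (r c : Z → Bool → ℝ) (w1 w2 : Z → ℝ)
    (hw1 : ∀ z, 0 ≤ w1 z) (hw2 : ∀ z, 0 ≤ w2 z)
    (β : ℝ) (hβ : 0 < β) (C : ℝ)
    (M K : ℝ) (hM : 0 < M) (hK : 0 < K)
    (hc_bound : ∀ z a, 0 ≤ c z a ∧ c z a ≤ M)
    (hw2_bound : ∀ z, w2 z ≤ K) :
    (∃! lamstar : ℝ, lamstar ∈ Set.Ici (0 : ℝ) ∧
      ∀ lam ∈ Set.Ici (0 : ℝ),
        dualFun ρ r c w1 w2 β C lamstar ≤ dualFun ρ r c w1 w2 β C lam) ∧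
    (∀ lamstar : ℝ,
      (lamstar ∈ Set.Ici (0 : ℝ) ∧
        ∀ lam ∈ Set.Ici (0 : ℝ),
          dualFun ρ r c w1 w2 β C lamstar ≤ dualFun ρ r c w1 w2 β C lam) →
      ∀ seq : ℕ → ℝ, 0 ≤ seq 0 →
        (∀ t : ℕ, seq (t + 1)
          = max 0 (seq t - 2 * β / (M ^ 2 * K ^ 2 + 2 * β ^ 2)
              * deriv (fun l => dualFun ρ r c w1 w2 β C l) (seq t))) →
        ∀ t : ℕ,
          |seq t - lamstar|
            ≤ (M ^ 2 * K ^ 2 / (M ^ 2 * K ^ 2 + 2 * β ^ 2)) ^ t * |seq 0 - lamstar|) := by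
  have hρ0 : ∀ z, 0 ≤ ρ z := fun z => (hρ_pos z).le
  have hDpos : 0 < M ^ 2 * K ^ 2 + 2 * β ^ 2 := by positivity
  set η := 2 * β / (M ^ 2 * K ^ 2 + 2 * β ^ 2) with hηdef
  set rate := M ^ 2 * K ^ 2 / (M ^ 2 * K ^ 2 + 2 * β ^ 2) with hratedef
  set L := M ^ 2 * K ^ 2 / (4 * β) + β with hLdef
  set g := fun l => dDer ρ r c w1 w2 β C l with hgdef
  set f := fun l => dualFun ρ r c w1 w2 β C l with hfdef
  have hηpos : 0 < η := by rw [hηdef]; positivity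
  have hLpos : 0 < L := by rw [hLdef]; positivity
  have hrate0 : 0 ≤ rate := by rw [hratedef]; positivity
  have hrate1 : rate < 1 := by rw [hratedef, div_lt_one hDpos]; nlinarith
  have hrate_eq : rate = 1 - η * β := by
    rw [hratedef, hηdef]; field_simp; ring
  have hηL : η * L ≤ 1 := by
    rw [hηdef, hLdef]
    have h1 : 2 * β / (M ^ 2 * K ^ 2 + 2 * β ^ 2) * (M ^ 2 * K ^ 2 / (4 * β) + β)
        = (M ^ 2 * K ^ 2 / 2 + 2 * β ^ 2) / (M ^ 2 * K ^ 2 + 2 * β ^ 2) := by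
      field_simp; ring
    rw [h1, div_le_one hDpos]
    nlinarith [sq_nonneg (M * K)]
  have hslope : ∀ {x y : ℝ}, x ≤ y →
      β * (y - x) ≤ g y - g x ∧ g y - g x ≤ L * (y - x) := fun {x y} h =>
    dDer_slope hρ0 hρ_sum hβ hM hK hc_bound hw2 hw2_bound h
  have hmono : ∀ {x y : ℝ}, x ≤ y → g x ≤ g y := by
    intro x y h
    have h1 := (hslope h).1
    nlinarith [mul_nonneg hβ.le (sub_nonneg.2 h)]
  have hmvt : ∀ {a b : ℝ}, a < b → ∃ ξ ∈ Set.Ioo a b, f b - f a = g ξ * (b - a) :=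
    fun {a b} h => dual_mvt hβ h
  clear_value η rate L
  -- contraction
  have hcontr : ∀ x y : ℝ, x ≤ y →
      |Tmap ρ r c w1 w2 β C η y - Tmap ρ r c w1 w2 β C η x| ≤ rate * (y - x) := by
    intro x y hxy
    obtain ⟨hlo, hhi⟩ := hslope hxy
    have h1 : (y - η * g y) - (x - η * g x) ≤ rate * (y - x) := by
      rw [hrate_eq]
      nlinarith [mul_le_mul_of_nonneg_left hlo hηpos.le]
    have h2 : 0 ≤ (y - η * g y) - (x - η * g x) := by
      nlinarith [mul_le_mul_of_nonneg_left hhi hηpos.le,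
        mul_le_mul_of_nonneg_right hηL (sub_nonneg.2 hxy)]
    calc |Tmap ρ r c w1 w2 β C η y - Tmap ρ r c w1 w2 β C η x|
        ≤ |(y - η * g y) - (x - η * g x)| := by
          rw [Tmap, Tmap, max_comm 0 (y - η * dDer ρ r c w1 w2 β C y),
            max_comm 0 (x - η * dDer ρ r c w1 w2 β C x)]
          exact abs_max_sub_max_le_abs _ _ _
      _ ≤ rate * (y - x) := by rw [abs_of_nonneg h2]; exact h1
  have hcontr' : ∀ x y : ℝ,
      |Tmap ρ r c w1 w2 β C η x - Tmap ρ r c w1 w2 β C η y| ≤ rate * |x - y| := by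
    intro x y
    rcases le_total x y with h | h
    · rw [abs_sub_comm, abs_sub_comm x y, abs_of_nonneg (sub_nonneg.2 h)]
      exact hcontr x y h
    · rw [abs_of_nonneg (sub_nonneg.2 h)]
      exact hcontr y x h
  -- fixed point existence via IVT
  have hgcont : Continuous g := dDer_cont hβ
  have hTcont : Continuous (fun u => Tmap ρ r c w1 w2 β C η u) := by
    simp only [Tmap]
    exact continuous_const.max (continuous_id.sub (continuous_const.mul hgcont))
  set lam0 := max 0 (-(g 0) / β) with hlam0def
  have hlam0_nonneg : (0:ℝ) ≤ lam0 := le_max_left _ _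
  have hglam0 : 0 ≤ g lam0 := by
    have h1 := (hslope hlam0_nonneg).1
    have h2 : -(g 0) / β ≤ lam0 := le_max_right _ _
    rw [div_le_iff₀ hβ] at h2
    nlinarith
  have hGcont : Continuous (fun l => Tmap ρ r c w1 w2 β C η l - l) :=
    hTcont.sub continuous_id
  have hG0 : 0 ≤ Tmap ρ r c w1 w2 β C η 0 - 0 := by
    rw [Tmap]; simp only [sub_zero]; exact le_max_left _ _
  have hGlam0 : Tmap ρ r c w1 w2 β C η lam0 - lam0 ≤ 0 := by
    have hT0 : Tmap ρ r c w1 w2 β C η lam0 ≤ lam0 := by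
      rw [Tmap]
      exact max_le hlam0_nonneg (by nlinarith [mul_nonneg hηpos.le hglam0])
    linarith
  obtain ⟨ls, hlsmem, hlsfix0⟩ := intermediate_value_Icc' hlam0_nonneg hGcont.continuousOn
    ⟨hGlam0, hG0⟩
  have hfix : Tmap ρ r c w1 w2 β C η ls = ls := by
    have : Tmap ρ r c w1 w2 β C η ls - ls = 0 := hlsfix0
    linarith
  have hls_nonneg : 0 ≤ ls := by rw [← hfix, Tmap]; exact le_max_left _ _
  -- uniqueness of fixed points
  have huniq_fix : ∀ u, Tmap ρ r c w1 w2 β C η u = u → u = ls := by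
    intro u hu
    have h := hcontr' u ls
    rw [hu, hfix] at h
    have habs : |u - ls| = 0 := le_antisymm (by nlinarith [abs_nonneg (u - ls)]) (abs_nonneg _)
    exact sub_eq_zero.1 (abs_eq_zero.1 habs)
  -- KKT conditions at ls
  have hls_kkt : 0 ≤ g ls ∧ (ls = 0 ∨ g ls = 0) := by
    rcases le_total (ls - η * g ls) 0 with h | h
    · have h0 : ls = 0 := by rw [← hfix, Tmap]; exact max_eq_left h
      rw [h0] at h
      constructor
      · rw [h0]
        by_contra hneg
        push_neg at hneg
        nlinarith [mul_pos hηpos (neg_pos.2 hneg)]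
      · exact Or.inl h0
    · have h1 : Tmap ρ r c w1 w2 β C η ls = ls - η * g ls := by
        rw [Tmap]; exact max_eq_right h
      rw [hfix] at h1
      have hgz : g ls = 0 := by
        have : η * g ls = 0 := by linarith
        exact (mul_eq_zero.1 this).resolve_left hηpos.ne'
      exact ⟨hgz.ge, Or.inr hgz⟩
  -- ls is a minimizer
  have hls_min : ∀ lam ∈ Set.Ici (0:ℝ), f ls ≤ f lam := by
    intro lam hlam
    rcases lt_trichotomy ls lam with h | h | h
    · obtain ⟨ξ, hξm, hξ⟩ := hmvt h
      have hgξ : 0 ≤ g ξ := le_trans hls_kkt.1 (hmono hξm.1.le)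
      nlinarith [mul_nonneg hgξ (sub_pos.2 h).le]
    · rw [h]
    · have hls_pos : 0 < ls := lt_of_le_of_lt hlam h
      have hgls : g ls = 0 := hls_kkt.2.resolve_left hls_pos.ne'
      obtain ⟨ξ, hξm, hξ⟩ := hmvt h
      have hgξ : g ξ ≤ 0 := by have := hmono hξm.2.le; linarith
      nlinarith [mul_nonneg (neg_nonneg.2 hgξ) (sub_pos.2 h).le]
  -- any minimizer is a fixed point
  have hmin_fix : ∀ y, 0 ≤ y → (∀ lam ∈ Set.Ici (0:ℝ), f y ≤ f lam) →
      Tmap ρ r c w1 w2 β C η y = y := by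
    intro y hy hymin
    have hgy : 0 ≤ g y := by
      by_contra hneg
      push_neg at hneg
      have hh0pos : 0 < -(g y) / (2 * L) := by
        apply div_pos (neg_pos.2 hneg); positivity
      obtain ⟨ξ, hξm, hξ⟩ := hmvt (show y < y + -(g y) / (2 * L) by linarith)
      have hub := (hslope hξm.1.le).2
      have hLh : L * (-(g y) / (2 * L)) = -(g y) / 2 := by
        have hL0 : L ≠ 0 := hLpos.ne'
        field_simp
      have hgξ : g ξ ≤ g y / 2 := by
        have hd : ξ - y ≤ -(g y) / (2 * L) := by
          have := hξm.2; linarith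
        have := mul_le_mul_of_nonneg_left hd hLpos.le
        rw [hLh] at this
        linarith
      have hlt : f (y + -(g y) / (2 * L)) < f y := by
        nlinarith [mul_lt_mul_of_pos_right (show g ξ < 0 by linarith) hh0pos]
      exact absurd (hymin _ (by simp only [Set.mem_Ici]; linarith)) (not_le.2 hlt)
    have h2 : y = 0 ∨ g y = 0 := by
      rcases eq_or_lt_of_le hy with h | hypos
      · exact Or.inl h.symm
      · right
        by_contra hne
        have hgpos : 0 < g y := lt_of_le_of_ne hgy (Ne.symm hne)
        have hh0pos : 0 < min y (g y / (2 * L)) := lt_min hypos (by positivity)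
        have hh0y : min y (g y / (2 * L)) ≤ y := min_le_left _ _
        have hh0g : min y (g y / (2 * L)) ≤ g y / (2 * L) := min_le_right _ _
        obtain ⟨ξ, hξm, hξ⟩ := hmvt (show y - min y (g y / (2 * L)) < y by linarith)
        have hub := (hslope hξm.2.le).2
        have hLh : L * (g y / (2 * L)) = g y / 2 := by
          have hL0 : L ≠ 0 := hLpos.ne'
          field_simp
        have hgξ : g y / 2 ≤ g ξ := by
          have hd : y - ξ ≤ min y (g y / (2 * L)) := by
            have := hξm.1; linarith
          have h3 : y - ξ ≤ g y / (2 * L) := le_trans hd hh0g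
          have := mul_le_mul_of_nonneg_left h3 hLpos.le
          rw [hLh] at this
          linarith
        have hlt : f (y - min y (g y / (2 * L))) < f y := by
          nlinarith [mul_lt_mul_of_pos_right (show (0:ℝ) < g ξ by linarith) hh0pos]
        exact absurd (hymin _ (by simp only [Set.mem_Ici]; linarith)) (not_le.2 hlt)
    rcases h2 with h | h
    · rw [h, Tmap]
      rw [h] at hgy
      have : (0:ℝ) - η * g 0 ≤ 0 := by nlinarith [mul_nonneg hηpos.le hgy]
      simp only [zero_sub] at this ⊢
      exact max_eq_left this
    · have h' : dDer ρ r c w1 w2 β C y = 0 := h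
      rw [Tmap, h', mul_zero, sub_zero]
      exact max_eq_right hy
  constructor
  · exact ⟨ls, ⟨hls_nonneg, hls_min⟩, fun y hy => huniq_fix y (hmin_fix y hy.1 hy.2)⟩
  · intro lamstar hls' seq hseq0 hrec
    have hfixstar : Tmap ρ r c w1 w2 β C η lamstar = lamstar :=
      hmin_fix lamstar hls'.1 hls'.2
    have hderiv : ∀ u, deriv (fun l => dualFun ρ r c w1 w2 β C l) u
        = dDer ρ r c w1 w2 β C u := fun u => (dual_hasDeriv hβ u).deriv
    intro t
    induction t with
    | zero => simp
    | succ t ih =>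
      have hTs : seq (t + 1) = Tmap ρ r c w1 w2 β C η (seq t) := by
        rw [hrec t, Tmap, hderiv (seq t)]
      calc |seq (t + 1) - lamstar|
          = |Tmap ρ r c w1 w2 β C η (seq t) - Tmap ρ r c w1 w2 β C η lamstar| := by
            rw [hTs, hfixstar]
        _ ≤ rate * |seq t - lamstar| := hcontr' (seq t) lamstar
        _ ≤ rate * (rate ^ t * |seq 0 - lamstar|) := mul_le_mul_of_nonneg_left ih hrate0
        _ = rate ^ (t + 1) * |seq 0 - lamstar| := by ring
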